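/- Let |ψ⟩ be a bipartite pure state with Schmidt coefficients λ_0 ≥ λ_1 ≥ … ≥ λ_{d-1} (∑_i λ_i = 1). Then the maximal fidelity between |ψ⟩⟨ψ| and any pure state of Schmidt rank at most k equals ∑_{i=0}^{k-1} λ_i, and the maximum is attained by |φ⟩ = (∑_{j<k} λ_j)^{-1/2} ∑_{i<k} √λ_i |ii⟩ expressed in the Schmidt bases of |ψ⟩. -/

import Mathlib

open Matrix

/-- Coefficient matrix of a bipartite vector. -/
noncomputable def coeffMat {dA dB : ℕ} (v : Fin dA × Fin dB → ℂ) :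
    Matrix (Fin dA) (Fin dB) ℂ :=
  Matrix.of fun i j => v (i, j)

noncomputable def toE {n : ℕ} (v : Fin n → ℂ) : EuclideanSpace ℂ (Fin n) := WithLp.toLp 2 v

lemma inner_toE {n : ℕ} (v w : Fin n → ℂ) :
    (inner ℂ (toE v) (toE w) : ℂ) = ∑ x, star (v x) * w x := by
  simp [toE, PiLp.inner_apply, RCLike.inner_apply', Complex.star_def, mul_comm]

lemma orthonormal_toE {d n : ℕ} (v : Fin d → Fin n → ℂ)
    (h : ∀ i j, ∑ x, star (v i x) * v j x = if i = j then 1 else 0) :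
    Orthonormal ℂ (fun i => toE (v i)) := by
  rw [orthonormal_iff_ite]
  intro i j
  rw [inner_toE, h]

lemma norm_sq_toE {n : ℕ} (v : Fin n → ℂ) :
    ‖toE v‖ ^ 2 = ∑ x, ‖v x‖ ^ 2 := by
  have h := inner_self_eq_norm_sq (𝕜 := ℂ) (toE v)
  rw [inner_toE] at h
  rw [← h]
  simp only [Complex.star_def, Complex.conj_mul', map_sum]
  simp [← Complex.ofReal_pow]

lemma re_sum_conj_mul {ι : Type*} [Fintype ι] (v : ι → ℂ) :
    RCLike.re (∑ x, star (v x) * v x) = ∑ x, ‖v x‖ ^ 2 := by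
  simp only [Complex.star_def, Complex.conj_mul', map_sum]
  simp [← Complex.ofReal_pow]

lemma expand_master {I J : Type*} [Fintype I] [Fintype J] {dA dB : ℕ}
    (a : I → Fin dA → ℂ) (b : I → Fin dB → ℂ) (c : J → Fin dA → ℂ) (e : J → Fin dB → ℂ) :
    ∑ p : Fin dA × Fin dB, star (∑ i, a i p.1 * b i p.2) * (∑ j, c j p.1 * e j p.2)
      = ∑ i, ∑ j, (∑ x, star (a i x) * c j x) * (∑ y, star (b i y) * e j y) := by
  have h1 : ∀ p : Fin dA × Fin dB,
      star (∑ i, a i p.1 * b i p.2) * (∑ j, c j p.1 * e j p.2)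
        = ∑ i, ∑ j, (star (a i p.1) * c j p.1) * (star (b i p.2) * e j p.2) := by
    intro p
    rw [star_sum, Finset.sum_mul_sum]
    refine Finset.sum_congr rfl fun i _ => Finset.sum_congr rfl fun j _ => ?_
    rw [star_mul']
    ring
  calc ∑ p : Fin dA × Fin dB, star (∑ i, a i p.1 * b i p.2) * (∑ j, c j p.1 * e j p.2)
      = ∑ p : Fin dA × Fin dB, ∑ i, ∑ j,
          (star (a i p.1) * c j p.1) * (star (b i p.2) * e j p.2) :=
        Finset.sum_congr rfl fun p _ => h1 p
    _ = ∑ i, ∑ p : Fin dA × Fin dB, ∑ j,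
          (star (a i p.1) * c j p.1) * (star (b i p.2) * e j p.2) := Finset.sum_comm
    _ = ∑ i, ∑ j, ∑ p : Fin dA × Fin dB,
          (star (a i p.1) * c j p.1) * (star (b i p.2) * e j p.2) :=
        Finset.sum_congr rfl fun i _ => Finset.sum_comm
    _ = ∑ i, ∑ j, (∑ x, star (a i x) * c j x) * (∑ y, star (b i y) * e j y) := by
        refine Finset.sum_congr rfl fun i _ => Finset.sum_congr rfl fun j _ => ?_
        rw [Finset.sum_mul_sum, Fintype.sum_prod_type]

lemma expand_master' {I J : Type*} [Fintype I] [Fintype J] {dA dB : ℕ}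
    (ca : I → ℂ) (a : I → Fin dA → ℂ) (b : I → Fin dB → ℂ)
    (cc : J → ℂ) (c : J → Fin dA → ℂ) (e : J → Fin dB → ℂ) :
    ∑ p : Fin dA × Fin dB, star (∑ i, ca i * a i p.1 * b i p.2) * (∑ j, cc j * c j p.1 * e j p.2)
      = ∑ i, ∑ j, (star (ca i) * cc j) *
          ((∑ x, star (a i x) * c j x) * (∑ y, star (b i y) * e j y)) := by
  have h1 : ∀ p : Fin dA × Fin dB,
      star (∑ i, ca i * a i p.1 * b i p.2) * (∑ j, cc j * c j p.1 * e j p.2)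
        = ∑ i, ∑ j, (star (ca i) * cc j) *
            ((star (a i p.1) * c j p.1) * (star (b i p.2) * e j p.2)) := by
    intro p
    rw [star_sum, Finset.sum_mul_sum]
    refine Finset.sum_congr rfl fun i _ => Finset.sum_congr rfl fun j _ => ?_
    rw [star_mul', star_mul']
    ring
  calc ∑ p : Fin dA × Fin dB, star (∑ i, ca i * a i p.1 * b i p.2) *
        (∑ j, cc j * c j p.1 * e j p.2)
      = ∑ p : Fin dA × Fin dB, ∑ i, ∑ j, (star (ca i) * cc j) *
          ((star (a i p.1) * c j p.1) * (star (b i p.2) * e j p.2)) :=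
        Finset.sum_congr rfl fun p _ => h1 p
    _ = ∑ i, ∑ p : Fin dA × Fin dB, ∑ j, (star (ca i) * cc j) *
          ((star (a i p.1) * c j p.1) * (star (b i p.2) * e j p.2)) := Finset.sum_comm
    _ = ∑ i, ∑ j, ∑ p : Fin dA × Fin dB, (star (ca i) * cc j) *
          ((star (a i p.1) * c j p.1) * (star (b i p.2) * e j p.2)) :=
        Finset.sum_congr rfl fun i _ => Finset.sum_comm
    _ = ∑ i, ∑ j, (star (ca i) * cc j) *
          ((∑ x, star (a i x) * c j x) * (∑ y, star (b i y) * e j y)) := by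
        refine Finset.sum_congr rfl fun i _ => Finset.sum_congr rfl fun j _ => ?_
        rw [← Finset.mul_sum]
        congr 1
        rw [Finset.sum_mul_sum, Fintype.sum_prod_type]

lemma exists_decomp {dA dB k : ℕ} (χ : Fin dA × Fin dB → ℂ) (h : (coeffMat χ).rank ≤ k) :
    ∃ (m : ℕ) (f : Fin m → Fin dA → ℂ) (g : Fin m → Fin dB → ℂ),
      m ≤ k ∧ Orthonormal ℂ (fun j => toE (f j)) ∧ ∀ x y, χ (x, y) = ∑ j, f j x * g j y := by
  classical
  set M := coeffMat χ with hM
  let L : (Fin dA → ℂ) ≃ₗ[ℂ] EuclideanSpace ℂ (Fin dA) :=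
    (WithLp.linearEquiv 2 ℂ (Fin dA → ℂ)).symm
  let S : Submodule ℂ (EuclideanSpace ℂ (Fin dA)) :=
    (LinearMap.range M.mulVecLin).map
      (L : (Fin dA → ℂ) →ₗ[ℂ] EuclideanSpace ℂ (Fin dA))
  have hfin : Module.Finite ℂ S := by infer_instance
  have hrank : Module.finrank ℂ S ≤ k := by
    rw [show Module.finrank ℂ S = M.rank from L.finrank_map_eq _]
    exact h
  set m := Module.finrank ℂ S with hm
  let b : OrthonormalBasis (Fin m) ℂ S := stdOrthonormalBasis ℂ S
  have hcol : ∀ y : Fin dB, toE (fun x => χ (x, y)) ∈ S := by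
    intro y
    refine ⟨M.mulVec (Pi.single y 1), ⟨Pi.single y 1, rfl⟩, ?_⟩
    rw [Matrix.mulVec_single]
    show L _ = _
    rw [show (MulOpposite.op (1 : ℂ) • M.col y : Fin dA → ℂ) = fun x => χ (x, y) by
      funext x; simp [hM, coeffMat]]
    rfl
  refine ⟨m, fun j => (b j : EuclideanSpace ℂ (Fin dA)),
    fun j y => b.repr ⟨toE (fun x => χ (x, y)), hcol y⟩ j, hrank, ?_, ?_⟩
  · rw [orthonormal_iff_ite]
    intro i j
    have := b.orthonormal
    rw [orthonormal_iff_ite] at this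
    rw [← this i j]
    simp [toE, Submodule.coe_inner]
  · intro x y
    have hbs := b.sum_repr ⟨toE (fun x => χ (x, y)), hcol y⟩
    have h2 := congrArg (fun (v : S) =>
      (PiLp.projₗ (𝕜 := ℂ) 2 (fun _ : Fin dA => ℂ) x) (v : EuclideanSpace ℂ (Fin dA))) hbs
    simp only [Submodule.coe_sum, Submodule.coe_smul, map_sum, _root_.map_smul] at h2
    refine Eq.trans (show χ (x,y) = toE (fun x => χ (x, y)) x by simp [toE]) ?_
    rw [show toE (fun x => χ (x, y)) x
        = (PiLp.projₗ (𝕜 := ℂ) 2 (fun _ : Fin dA => ℂ) x) (toE (fun x => χ (x, y))) from rfl, ← h2]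
    refine Finset.sum_congr rfl fun j _ => ?_
    show _ • ((b j : EuclideanSpace ℂ (Fin dA)) x) = _
    rw [smul_eq_mul, mul_comm]

lemma card_filter_lt {d k : ℕ} (hkd : k ≤ d) :
    (Finset.univ.filter (fun i : Fin d => (i : ℕ) < k)).card = k := by
  have : Finset.univ.filter (fun i : Fin d => (i : ℕ) < k)
      = Finset.map (Fin.castLEEmb hkd) Finset.univ := by
    ext i
    simp only [Finset.mem_filter, Finset.mem_univ, true_and, Finset.mem_map]
    constructor
    · intro h
      exact ⟨⟨(i : ℕ), h⟩, rfl⟩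
    · rintro ⟨j, -, rfl⟩
      simp [Fin.castLEEmb]
  rw [this, Finset.card_map, Finset.card_univ, Fintype.card_fin]

lemma sum_weighted_le {d k : ℕ} (hk1 : 1 ≤ k) (hkd : k ≤ d) (lam : Fin d → ℝ)
    (hnn : ∀ i, 0 ≤ lam i) (hmono : Antitone lam) (t : Fin d → ℝ)
    (ht0 : ∀ i, 0 ≤ t i) (ht1 : ∀ i, t i ≤ 1) (htsum : ∑ i, t i ≤ k) :
    ∑ i, lam i * t i ≤ ∑ i ∈ Finset.univ.filter (fun i : Fin d => (i : ℕ) < k), lam i := by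
  classical
  set F := Finset.univ.filter (fun i : Fin d => (i : ℕ) < k) with hF
  have hk1d : k - 1 < d := by omega
  set c := lam ⟨k - 1, hk1d⟩ with hc
  have hc0 : 0 ≤ c := hnn _
  have hcF : ∀ i ∈ F, c ≤ lam i := by
    intro i hi
    rw [hF, Finset.mem_filter] at hi
    exact hmono (by rw [Fin.le_def]; simp; omega)
  have hcNF : ∀ i ∈ Fᶜ, lam i ≤ c := by
    intro i hi
    rw [hF, Finset.compl_filter, Finset.mem_filter] at hi
    exact hmono (by rw [Fin.le_def]; simp; omega)
  have hsplit : ∑ i, lam i * t i = ∑ i ∈ F, lam i * t i + ∑ i ∈ Fᶜ, lam i * t i :=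
    (Finset.sum_add_sum_compl F _).symm
  have htsplit : ∑ i ∈ F, t i + ∑ i ∈ Fᶜ, t i = ∑ i, t i :=
    Finset.sum_add_sum_compl F _
  have hcard : (F.card : ℝ) = k := by rw [hF, card_filter_lt hkd]
  have h1 : ∑ i ∈ F, lam i * t i - ∑ i ∈ F, lam i ≤ c * (∑ i ∈ F, t i) - c * k := by
    have hle : ∑ i ∈ F, (lam i * t i - lam i) ≤ ∑ i ∈ F, (c * t i - c) := by
      refine Finset.sum_le_sum fun i hi => ?_
      have h1' : lam i * (t i - 1) ≤ c * (t i - 1) :=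
        mul_le_mul_of_nonpos_right (hcF i hi) (by linarith [ht1 i])
      nlinarith
    rw [Finset.sum_sub_distrib, Finset.sum_sub_distrib] at hle
    rw [Finset.sum_const, nsmul_eq_mul, hcard, ← Finset.mul_sum] at hle
    linarith
  have h2 : ∑ i ∈ Fᶜ, lam i * t i ≤ c * ∑ i ∈ Fᶜ, t i := by
    rw [Finset.mul_sum]
    exact Finset.sum_le_sum fun i hi => mul_le_mul_of_nonneg_right (hcNF i hi) (ht0 i)
  have h3 : c * (∑ i ∈ F, t i) + c * ∑ i ∈ Fᶜ, t i ≤ c * k := by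
    rw [← mul_add, htsplit]
    exact mul_le_mul_of_nonneg_left htsum hc0
  linarith

/-- for a pure state `|ψ⟩` with Schmidt coefficients
`λ₀ ≥ λ₁ ≥ … ≥ λ_{d-1}` (summing to 1), the maximal fidelity `|⟨φ|ψ⟩|²` over unit
vectors `|φ⟩` of Schmidt rank at most `k` equals `∑_{i<k} λᵢ`, and is attained by
`|φ⟩ = (∑_{j<k} λⱼ)^{-1/2} ∑_{i<k} √λᵢ |ii⟩` in the Schmidt bases of `|ψ⟩`. -/
theorem k_schmidt_fidelity_pure {dA dB d k : ℕ} (hk1 : 1 ≤ k) (hkd : k ≤ d)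
    (lam : Fin d → ℝ) (hnn : ∀ i, 0 ≤ lam i) (hmono : Antitone lam)
    (hsum : ∑ i, lam i = 1)
    (eA : Fin d → Fin dA → ℂ) (eB : Fin d → Fin dB → ℂ)
    (honA : ∀ i j, ∑ x, star (eA i x) * eA j x = if i = j then 1 else 0)
    (honB : ∀ i j, ∑ x, star (eB i x) * eB j x = if i = j then 1 else 0)
    (ψ : Fin dA × Fin dB → ℂ)
    (hψ : ψ = fun p => ∑ i, (Real.sqrt (lam i) : ℂ) * eA i p.1 * eB i p.2)
    (φ : Fin dA × Fin dB → ℂ)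
    (hφ : φ = fun p =>
      (1 / (Real.sqrt (∑ j ∈ Finset.univ.filter (fun j : Fin d => (j : ℕ) < k), lam j) : ℂ)) *
        ∑ i ∈ Finset.univ.filter (fun i : Fin d => (i : ℕ) < k),
          (Real.sqrt (lam i) : ℂ) * eA i p.1 * eB i p.2) :
    IsGreatest
      { F : ℝ | ∃ χ : Fin dA × Fin dB → ℂ,
          (∑ p, ‖χ p‖ ^ 2 = 1) ∧ (coeffMat χ).rank ≤ k ∧
          F = ‖∑ p, star (χ p) * ψ p‖ ^ 2 }
      (∑ i ∈ Finset.univ.filter (fun i : Fin d => (i : ℕ) < k), lam i) ∧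
    ‖∑ p, star (φ p) * ψ p‖ ^ 2 =
      ∑ i ∈ Finset.univ.filter (fun i : Fin d => (i : ℕ) < k), lam i := by
  classical
  set F := Finset.univ.filter (fun i : Fin d => (i : ℕ) < k) with hFdef
  set s := ∑ i ∈ F, lam i with hsdef
  have hd0 : 0 < d := lt_of_lt_of_le hk1 hkd
  have hlam0 : 0 < lam ⟨0, hd0⟩ := by
    rcases lt_or_ge 0 (lam ⟨0, hd0⟩) with h | h
    · exact h
    · exfalso
      have hall : ∀ i, lam i = 0 := by
        intro i
        have h1 : lam i ≤ lam ⟨0, hd0⟩ := hmono (by simp [Fin.le_def])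
        have h2 := hnn i
        linarith
      rw [Finset.sum_congr rfl fun i _ => hall i] at hsum
      simp at hsum
  have hs_pos : 0 < s := by
    have h0F : (⟨0, hd0⟩ : Fin d) ∈ F := by
      rw [hFdef]
      simp only [Finset.mem_filter, Finset.mem_univ, true_and]
      omega
    exact lt_of_lt_of_le hlam0 (Finset.single_le_sum (fun i _ => hnn i) h0F)
  have hsqrt_ne : ((Real.sqrt s : ℝ) : ℂ) ≠ 0 := by
    exact_mod_cast ne_of_gt (Real.sqrt_pos.mpr hs_pos)
  set cφ : Fin d → ℂ := fun i =>
    if (i : ℕ) < k then (1 / (Real.sqrt s : ℂ)) * (Real.sqrt (lam i) : ℂ) else 0 with hcφ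
  have hφ' : φ = fun p => ∑ i, cφ i * eA i p.1 * eB i p.2 := by
    rw [hφ]
    funext p
    rw [Finset.mul_sum, hFdef, Finset.sum_filter]
    refine Finset.sum_congr rfl fun i _ => ?_
    by_cases h : (i : ℕ) < k
    · simp only [hcφ, h, if_true]; ring
    · simp [hcφ, h]
  -- the inner product ⟨φ, ψ⟩
  have hval : ∑ p, star (φ p) * ψ p = ((Real.sqrt s : ℝ) : ℂ) := by
    rw [hφ', hψ]
    have hm := expand_master' cφ eA eB (fun i => ((Real.sqrt (lam i) : ℝ) : ℂ)) eA eB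
    rw [hm]
    simp only [honA, honB, mul_ite, mul_one, mul_zero, ite_mul, zero_mul,
      Finset.sum_ite_eq, Finset.mem_univ, if_true]
    have hstar : ∀ i : Fin d, star (cφ i)
        = if (i : ℕ) < k then (1 / (Real.sqrt s : ℂ)) * (Real.sqrt (lam i) : ℂ) else 0 := by
      intro i
      rw [hcφ]
      by_cases h : (i : ℕ) < k
      · simp [h, Complex.star_def, map_div₀, Complex.conj_ofReal]
      · simp [h]
    simp only [hstar, ite_mul, zero_mul]
    rw [← Finset.sum_filter, ← hFdef]
    have hterm : ∀ i ∈ F, (1 / (Real.sqrt s : ℂ)) * (Real.sqrt (lam i) : ℂ)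
        * ((Real.sqrt (lam i) : ℝ) : ℂ)
        = (1 / (Real.sqrt s : ℂ)) * ((lam i : ℝ) : ℂ) := by
      intro i _
      rw [mul_assoc, ← Complex.ofReal_mul, Real.mul_self_sqrt (hnn i)]
    rw [Finset.sum_congr rfl hterm, ← Finset.mul_sum, ← Complex.ofReal_sum, ← hsdef]
    field_simp
    rw [← Complex.ofReal_pow, Real.sq_sqrt hs_pos.le]
  have habs : ‖∑ p, star (φ p) * ψ p‖ ^ 2 = s := by
    rw [hval, Complex.norm_real, Real.norm_of_nonneg (Real.sqrt_nonneg s),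
      Real.sq_sqrt hs_pos.le]
  -- the norm of φ
  have hnormφ : ∑ p, ‖φ p‖ ^ 2 = 1 := by
    have hC : ((∑ p, ‖φ p‖ ^ 2 : ℝ) : ℂ) = 1 := by
      rw [Complex.ofReal_sum]
      have hz : ∀ z : ℂ, ((‖z‖ ^ 2 : ℝ) : ℂ) = star z * z := by
        intro z
        rw [Complex.star_def, Complex.conj_mul']
        norm_cast
      rw [Finset.sum_congr rfl fun p _ => hz (φ p)]
      rw [hφ']
      have hm := expand_master' cφ eA eB cφ eA eB
      rw [hm]
      simp only [honA, honB, mul_ite, mul_one, mul_zero, ite_mul, zero_mul,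
        Finset.sum_ite_eq, Finset.mem_univ, if_true]
      have hstar : ∀ i : Fin d, star (cφ i)
          = if (i : ℕ) < k then (1 / (Real.sqrt s : ℂ)) * (Real.sqrt (lam i) : ℂ) else 0 := by
        intro i
        rw [hcφ]
        by_cases h : (i : ℕ) < k
        · simp [h, Complex.star_def, map_div₀, Complex.conj_ofReal]
        · simp [h]
      simp only [hstar, hcφ, ite_mul, zero_mul, mul_ite, mul_zero]
      simp only [if_pos, ← Finset.sum_filter]
      have hterm : ∀ i ∈ F, (1 / (Real.sqrt s : ℂ)) * (Real.sqrt (lam i) : ℂ)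
          * ((1 / (Real.sqrt s : ℂ)) * (Real.sqrt (lam i) : ℂ))
          = (1 / ((s : ℝ) : ℂ)) * ((lam i : ℝ) : ℂ) := by
        intro i _
        have h1 : ((Real.sqrt (lam i) : ℝ) : ℂ) * ((Real.sqrt (lam i) : ℝ) : ℂ)
            = ((lam i : ℝ) : ℂ) := by
          rw [← Complex.ofReal_mul, Real.mul_self_sqrt (hnn i)]
        have h2 : ((Real.sqrt s : ℝ) : ℂ) * ((Real.sqrt s : ℝ) : ℂ)
            = ((s : ℝ) : ℂ) := by
          rw [← Complex.ofReal_mul, Real.mul_self_sqrt hs_pos.le]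
        have h3 : (1 / (Real.sqrt s : ℂ)) * (Real.sqrt (lam i) : ℂ)
            * ((1 / (Real.sqrt s : ℂ)) * (Real.sqrt (lam i) : ℂ))
            = ((Real.sqrt (lam i) : ℂ) * (Real.sqrt (lam i) : ℂ))
              * (1 / (((Real.sqrt s : ℝ) : ℂ) * ((Real.sqrt s : ℝ) : ℂ))) := by
          ring
        rw [h3, h1, h2]
        ring
      have hFF : Finset.filter (fun a : Fin d => (a : ℕ) < k) F = F := by
        rw [hFdef, Finset.filter_filter]
        simp
      rw [← hFdef]
      have hFF' : ∀ a ∈ F, star (if (a : ℕ) < k then (1 / (Real.sqrt s : ℂ)) * (Real.sqrt (lam a) : ℂ)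
            else 0) * ((1 / (Real.sqrt s : ℂ)) * (Real.sqrt (lam a) : ℂ))
          = (1 / (Real.sqrt s : ℂ)) * (Real.sqrt (lam a) : ℂ)
            * ((1 / (Real.sqrt s : ℂ)) * (Real.sqrt (lam a) : ℂ)) := by
        intro a ha
        rw [hFdef, Finset.mem_filter] at ha
        rw [if_pos ha.2]
        simp [Complex.star_def, map_div₀, Complex.conj_ofReal]
      rw [Finset.sum_congr rfl hFF']
      rw [Finset.sum_congr rfl hterm, ← Finset.mul_sum, ← Complex.ofReal_sum, ← hsdef]
      have hsC : ((s : ℝ) : ℂ) ≠ 0 := by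
        exact_mod_cast ne_of_gt hs_pos
      field_simp
    exact_mod_cast hC
  -- rank of φ
  have hrankφ : (coeffMat φ).rank ≤ k := by
    have hsub : LinearMap.range (coeffMat φ).mulVecLin
        ≤ Submodule.span ℂ ((F.image eA : Finset (Fin dA → ℂ)) : Set (Fin dA → ℂ)) := by
      rintro v ⟨w, rfl⟩
      have hv : (coeffMat φ).mulVecLin w
          = ∑ i ∈ F, ((1 / (Real.sqrt s : ℂ)) * (Real.sqrt (lam i) : ℂ)
              * ∑ y, eB i y * w y) • eA i := by
        funext x
        have hL : (coeffMat φ).mulVecLin w x = ∑ y, φ (x, y) * w y := by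
          simp [Matrix.mulVecLin_apply, Matrix.mulVec, dotProduct, coeffMat]
        rw [hL, hφ']
        have hR : (∑ i ∈ F, ((1 / (Real.sqrt s : ℂ)) * (Real.sqrt (lam i) : ℂ)
              * ∑ y, eB i y * w y) • eA i) x
            = ∑ i ∈ F, (1 / (Real.sqrt s : ℂ)) * (Real.sqrt (lam i) : ℂ)
              * (∑ y, eB i y * w y) * eA i x := by
          rw [Finset.sum_apply]
          exact Finset.sum_congr rfl fun i _ => rfl
        rw [hR]
        calc ∑ y, (∑ i, cφ i * eA i x * eB i y) * w y
            = ∑ i, ∑ y, cφ i * eA i x * eB i y * w y := by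
              rw [Finset.sum_comm]
              exact Finset.sum_congr rfl fun y _ => Finset.sum_mul _ _ _
          _ = ∑ i, cφ i * (∑ y, eB i y * w y) * eA i x := by
              refine Finset.sum_congr rfl fun i _ => ?_
              rw [Finset.mul_sum, Finset.sum_mul]
              exact Finset.sum_congr rfl fun y _ => by ring
          _ = ∑ i ∈ F, (1 / (Real.sqrt s : ℂ)) * (Real.sqrt (lam i) : ℂ)
              * (∑ y, eB i y * w y) * eA i x := by
              rw [hFdef, Finset.sum_filter]
              refine Finset.sum_congr rfl fun i _ => ?_
              by_cases h : (i : ℕ) < k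
              · simp only [hcφ, h, if_true]
                try ring
              · simp [hcφ, h]
      rw [hv]
      exact Submodule.sum_mem _ fun i hi => Submodule.smul_mem _ _
        (Submodule.subset_span (Finset.mem_coe.mpr (Finset.mem_image_of_mem eA hi)))
    calc (coeffMat φ).rank
        = Module.finrank ℂ (LinearMap.range (coeffMat φ).mulVecLin) := rfl
      _ ≤ Module.finrank ℂ
          (Submodule.span ℂ ((F.image eA : Finset (Fin dA → ℂ)) : Set (Fin dA → ℂ))) :=
          Submodule.finrank_mono hsub
      _ ≤ (F.image eA).card := finrank_span_finset_le_card _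
      _ ≤ F.card := Finset.card_image_le
      _ = k := by rw [hFdef, card_filter_lt hkd]
  refine ⟨⟨⟨φ, hnormφ, hrankφ, habs.symm⟩, ?_⟩, habs⟩
  rintro r ⟨χ, hχnorm, hχrank, rfl⟩
  obtain ⟨m, f, g, hmk, hfon, hdec⟩ := exists_decomp χ hχrank
  have hχfun : χ = fun p => ∑ j, f j p.1 * g j p.2 := by
    funext p
    calc χ p = χ (p.1, p.2) := by rw [Prod.mk.eta]
      _ = ∑ j, f j p.1 * g j p.2 := hdec p.1 p.2
  -- inner product formula
  have hz : ∑ p, star (χ p) * ψ p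
      = ∑ j : Fin m, ∑ i : Fin d, ((Real.sqrt (lam i) : ℂ) * (∑ x, star (f j x) * eA i x))
          * (∑ y, star (g j y) * eB i y) := by
    rw [hχfun, hψ]
    have hm2 := expand_master f g (fun i x => (Real.sqrt (lam i) : ℂ) * eA i x) eB
    rw [hm2]
    refine Finset.sum_congr rfl fun j _ => Finset.sum_congr rfl fun i _ => ?_
    congr 1
    rw [Finset.mul_sum]
    exact Finset.sum_congr rfl fun x _ => by ring
  set U : Fin d → Fin m → ℝ := fun i j => ‖∑ x, star (f j x) * eA i x‖ with hU
  set V : Fin d → Fin m → ℝ := fun i j => ‖∑ y, star (g j y) * eB i y‖ with hV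
  have hUnn : ∀ i j, 0 ≤ U i j := fun i j => norm_nonneg _
  have hVnn : ∀ i j, 0 ≤ V i j := fun i j => norm_nonneg _
  have habsle : ‖∑ p, star (χ p) * ψ p‖
      ≤ ∑ j : Fin m, ∑ i : Fin d, Real.sqrt (lam i) * (U i j * V i j) := by
    rw [hz]
    refine le_trans (norm_sum_le _ _) (Finset.sum_le_sum fun j _ => ?_)
    refine le_trans (norm_sum_le _ _) (Finset.sum_le_sum fun i _ => ?_)
    simp only [norm_mul, Complex.norm_real, Real.norm_eq_abs, abs_of_nonneg (Real.sqrt_nonneg _), hU, hV]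
    exact le_of_eq (mul_assoc _ _ _)
  set t : Fin d → ℝ := fun i => ∑ j, U i j ^ 2 with htdef
  have hCS : (∑ j : Fin m, ∑ i : Fin d, Real.sqrt (lam i) * (U i j * V i j)) ^ 2
      ≤ (∑ i, lam i * t i) * (∑ j : Fin m, ∑ i : Fin d, V i j ^ 2) := by
    have h1 : ∑ j : Fin m, ∑ i : Fin d, Real.sqrt (lam i) * (U i j * V i j)
        = ∑ q : Fin m × Fin d, (Real.sqrt (lam q.2) * U q.2 q.1) * V q.2 q.1 := by
      rw [Fintype.sum_prod_type]
      exact Finset.sum_congr rfl fun j _ => Finset.sum_congr rfl fun i _ => by ring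
    rw [h1]
    refine le_trans (Finset.sum_mul_sq_le_sq_mul_sq Finset.univ _ _) (le_of_eq ?_)
    congr 1
    · calc ∑ q : Fin m × Fin d, (Real.sqrt (lam q.2) * U q.2 q.1) ^ 2
          = ∑ j : Fin m, ∑ i : Fin d, lam i * U i j ^ 2 := by
            rw [Fintype.sum_prod_type]
            refine Finset.sum_congr rfl fun j _ => Finset.sum_congr rfl fun i _ => ?_
            rw [mul_pow, Real.sq_sqrt (hnn i)]
        _ = ∑ i : Fin d, ∑ j : Fin m, lam i * U i j ^ 2 := Finset.sum_comm
        _ = ∑ i, lam i * t i := by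
            refine Finset.sum_congr rfl fun i _ => ?_
            rw [htdef, ← Finset.mul_sum]
    · rw [Fintype.sum_prod_type]
  have honEA : Orthonormal ℂ (fun i => toE (eA i)) := orthonormal_toE eA honA
  have honEB : Orthonormal ℂ (fun i => toE (eB i)) := orthonormal_toE eB honB
  have ht0 : ∀ i, 0 ≤ t i := fun i => Finset.sum_nonneg fun j _ => sq_nonneg _
  have ht1 : ∀ i, t i ≤ 1 := by
    intro i
    have hb := hfon.sum_inner_products_le (toE (eA i)) (s := Finset.univ)
    rw [htdef]
    calc ∑ j, U i j ^ 2
        = ∑ j, ‖(inner ℂ (toE (f j)) (toE (eA i)) : ℂ)‖ ^ 2 := by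
          refine Finset.sum_congr rfl fun j _ => ?_
          rw [inner_toE, hU]
      _ ≤ ‖toE (eA i)‖ ^ 2 := hb
      _ = 1 := by rw [honEA.1 i]; norm_num
  have htsum : ∑ i, t i ≤ (k : ℝ) := by
    calc ∑ i, t i = ∑ j : Fin m, ∑ i : Fin d, U i j ^ 2 := by
          rw [show ∑ i, t i = ∑ i : Fin d, ∑ j : Fin m, U i j ^ 2 from
            Finset.sum_congr rfl fun i _ => by rw [htdef]]
          exact Finset.sum_comm
      _ ≤ ∑ _j : Fin m, (1 : ℝ) := by
          refine Finset.sum_le_sum fun j _ => ?_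
          have hb := honEA.sum_inner_products_le (toE (f j)) (s := Finset.univ)
          calc ∑ i, U i j ^ 2
              = ∑ i, ‖(inner ℂ (toE (eA i)) (toE (f j)) : ℂ)‖ ^ 2 := by
                refine Finset.sum_congr rfl fun i _ => ?_
                rw [show ‖(inner ℂ (toE (eA i)) (toE (f j)) : ℂ)‖
                    = ‖(inner ℂ (toE (f j)) (toE (eA i)) : ℂ)‖ by
                  rw [← inner_conj_symm (toE (f j))]; exact (RCLike.norm_conj _).symm]
                rw [inner_toE, hU]
            _ ≤ ‖toE (f j)‖ ^ 2 := hb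
            _ = 1 := by rw [hfon.1 j]; norm_num
      _ = (m : ℝ) := by simp
      _ ≤ (k : ℝ) := by exact_mod_cast hmk
  have hVsum : ∑ j : Fin m, ∑ i : Fin d, V i j ^ 2 ≤ 1 := by
    have hCnorm : ∑ p, star (χ p) * χ p = ∑ j : Fin m, ∑ y, star (g j y) * g j y := by
      rw [hχfun]
      have hm3 := expand_master f g f g
      rw [hm3]
      have horth : ∀ j j' : Fin m, ∑ x, star (f j x) * f j' x = if j = j' then 1 else 0 := by
        intro j j'
        have hoi := hfon
        rw [orthonormal_iff_ite] at hoi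
        rw [← inner_toE]
        exact hoi j j'
      simp only [horth, ite_mul, one_mul, zero_mul, Finset.sum_ite_eq, Finset.mem_univ, if_true]
    have hgnorm : ∑ j : Fin m, ∑ y, ‖g j y‖ ^ 2 = 1 := by
      have hre := congrArg RCLike.re hCnorm
      rw [re_sum_conj_mul, map_sum] at hre
      rw [Finset.sum_congr rfl fun j (_ : j ∈ Finset.univ) => re_sum_conj_mul (g j)] at hre
      rw [← hre, hχnorm]
    refine le_trans (Finset.sum_le_sum fun j (_ : j ∈ Finset.univ) => ?_) (le_of_eq hgnorm)
    have hb := honEB.sum_inner_products_le (toE (g j)) (s := Finset.univ)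
    calc ∑ i, V i j ^ 2
        = ∑ i, ‖(inner ℂ (toE (eB i)) (toE (g j)) : ℂ)‖ ^ 2 := by
          refine Finset.sum_congr rfl fun i _ => ?_
          rw [show ‖(inner ℂ (toE (eB i)) (toE (g j)) : ℂ)‖
              = ‖(inner ℂ (toE (g j)) (toE (eB i)) : ℂ)‖ by
            rw [← inner_conj_symm (toE (g j))]; exact (RCLike.norm_conj _).symm]
          rw [inner_toE, hV]
      _ ≤ ‖toE (g j)‖ ^ 2 := hb
      _ = ∑ y, ‖g j y‖ ^ 2 := norm_sq_toE _
  have hfinal : ∑ i, lam i * t i ≤ s := by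
    have := sum_weighted_le hk1 hkd lam hnn hmono t ht0 ht1 htsum
    rw [← hFdef, ← hsdef] at this
    exact this
  have hP0 : 0 ≤ ∑ i, lam i * t i :=
    Finset.sum_nonneg fun i _ => mul_nonneg (hnn i) (ht0 i)
  calc ‖∑ p, star (χ p) * ψ p‖ ^ 2
      ≤ (∑ j : Fin m, ∑ i : Fin d, Real.sqrt (lam i) * (U i j * V i j)) ^ 2 :=
        pow_le_pow_left₀ (norm_nonneg _) habsle 2
    _ ≤ (∑ i, lam i * t i) * (∑ j : Fin m, ∑ i : Fin d, V i j ^ 2) := hCS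
    _ ≤ (∑ i, lam i * t i) * 1 := mul_le_mul_of_nonneg_left hVsum hP0
    _ = ∑ i, lam i * t i := mul_one _
    _ ≤ s := hfinal
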